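/- The effective weight matrix satisfies W̃ ⪯ I in the Loewner order; that is, I − W̃ is positive semidefinite, and consequently vᵀ W̃ v ≤ ‖v‖₂² for every v ∈ ℝᵀ. -/

import Mathlib

open Matrix

theorem effective_weight_le_one (T q : ℕ) (hT : 0 < T) (hq : 0 < q)
    (W : Matrix (Fin T) (Fin T) ℝ) (w : Fin T → ℝ)
    (hW : W = Matrix.diagonal w) (hw : ∀ i, 0 ≤ w i ∧ w i ≤ 1)
    (Z : Matrix (Fin T) (Fin q) ℝ)
    (D : Matrix (Fin q) (Fin q) ℝ) (hD : D.PosDef) :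
    (1 - (W - W * Z * (Zᵀ * W * Z + D⁻¹)⁻¹ * Zᵀ * W)).PosSemidef ∧
      ∀ v : Fin T → ℝ,
        v ⬝ᵥ ((W - W * Z * (Zᵀ * W * Z + D⁻¹)⁻¹ * Zᵀ * W) *ᵥ v) ≤ ∑ i, (v i) ^ 2 := by
  have hWps : W.PosSemidef := by
    rw [hW]; exact Matrix.posSemidef_diagonal_iff.mpr fun i => (hw i).1
  have hZWZ : (Zᵀ * W * Z).PosSemidef := by
    have := hWps.conjTranspose_mul_mul_same Z
    simpa [Matrix.conjTranspose_eq_transpose_of_trivial, mul_assoc] using this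
  have hM : (Zᵀ * W * Z + D⁻¹).PosDef := Matrix.PosDef.posSemidef_add hZWZ hD.inv
  have hMinv : (Zᵀ * W * Z + D⁻¹)⁻¹.PosSemidef := hM.posSemidef.inv
  have hterm : (W * Z * (Zᵀ * W * Z + D⁻¹)⁻¹ * Zᵀ * W).PosSemidef := by
    have := hMinv.conjTranspose_mul_mul_same (Zᵀ * W)
    have hWt : Wᵀ = W := by rw [hW]; exact Matrix.diagonal_transpose w
    rw [show W * Z * (Zᵀ * W * Z + D⁻¹)⁻¹ * Zᵀ * W
      = W * Z * (Zᵀ * W * Z + D⁻¹)⁻¹ * (Zᵀ * W) from Matrix.mul_assoc _ _ _]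
    simpa [Matrix.conjTranspose_mul, Matrix.conjTranspose_eq_transpose_of_trivial, hWt,
      Matrix.transpose_transpose, mul_assoc] using this
  have hIW : (1 - W).PosSemidef := by
    rw [hW]
    have : (1 : Matrix (Fin T) (Fin T) ℝ) - Matrix.diagonal w
        = Matrix.diagonal (fun i => 1 - w i) := by
      rw [← Matrix.diagonal_one, ← Matrix.diagonal_sub]
    rw [this]
    exact Matrix.posSemidef_diagonal_iff.mpr fun i => by linarith [(hw i).2]
  have key : (1 - (W - W * Z * (Zᵀ * W * Z + D⁻¹)⁻¹ * Zᵀ * W)).PosSemidef := by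
    have h := hIW.add hterm
    have : (1 : Matrix (Fin T) (Fin T) ℝ) - W + W * Z * (Zᵀ * W * Z + D⁻¹)⁻¹ * Zᵀ * W
        = 1 - (W - W * Z * (Zᵀ * W * Z + D⁻¹)⁻¹ * Zᵀ * W) := by abel
    rwa [this] at h
  refine ⟨key, fun v => ?_⟩
  have h0 := key.dotProduct_mulVec_nonneg v
  have hv : star v = v := rfl
  rw [hv, Matrix.sub_mulVec, Matrix.one_mulVec, dotProduct_sub] at h0
  have hvv : v ⬝ᵥ v = ∑ i, (v i) ^ 2 := by
    simp [dotProduct, pow_two]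
  linarith
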